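/- Let ω > 0, r₀ = ‖ℓ − x₀‖ > 0, and let ψ₀ ∈ ℝ be such that x₀ − ℓ = r₀(cos ψ₀, sin ψ₀). Then the circular input u_circ(s) = ω r₀ (−sin(ωs + ψ₀), cos(ωs + ψ₀)) is a weakly regularly persistent input trajectory of the bearing-only system at x₀. -/

import Mathlib

open MeasureTheory Metric Set Filter Classical

/-- The plane `ℝ²` with the Euclidean norm. -/
abbrev Pt := EuclideanSpace ℝ (Fin 2)

/-- The vector `(a, b) ∈ ℝ²`. -/
noncomputable def vec2 (a b : ℝ) : Pt := (WithLp.equiv 2 (Fin 2 → ℝ)).symm ![a, b]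

/-- Bearing measurement towards the beacon `ℓ`: `h(z) = (ℓ−z)/‖ℓ−z‖` for `z ≠ ℓ`
(with the convention `h(ℓ) = 0`). -/
noncomputable def bearing (ℓ z : Pt) : Pt := if z = ℓ then 0 else ‖ℓ - z‖⁻¹ • (ℓ - z)

/-- Flow of the single-integrator dynamics `ẋ = u`:
`φ(s;t₁,ξ,u) = ξ + ∫_{t₁}^{s} u(τ)dτ`. -/
noncomputable def flow2 (u : ℝ → Pt) (s t₁ : ℝ) (ξ : Pt) : Pt := ξ + ∫ τ in t₁..s, u τ

/-- Cumulative output error of the bearing-only system. -/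
noncomputable def cumError2 (ℓ : Pt) (u : ℝ → Pt) (t₁ t₂ : ℝ) (ξ₁ ξ₂ : Pt) : ℝ :=
  ∫ s in t₁..t₂, ‖bearing ℓ (flow2 u s t₁ ξ₁) - bearing ℓ (flow2 u s t₁ ξ₂)‖ ^ 2

/-- A `𝒦`-function: continuous, strictly increasing on `[0,∞)`, vanishing at `0`. -/
def IsKFunction (κ : ℝ → ℝ) : Prop :=
  ContinuousOn κ (Set.Ici 0) ∧ StrictMonoOn κ (Set.Ici 0) ∧ κ 0 = 0

/-- Weakly persistent input trajectory at `x₀` for the bearing-only system. -/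
def WeaklyPersistentAt2 (ℓ : Pt) (u : ℝ → Pt) (x₀ : Pt) : Prop :=
  ∃ T > (0 : ℝ), ∀ t ≥ T, ∃ R > (0 : ℝ), ∃ κ : ℝ → ℝ, IsKFunction κ ∧
    ∀ ξ₁ ∈ Metric.closedBall (flow2 u (t - T) 0 x₀) R,
      ∀ ξ₂ ∈ Metric.closedBall (flow2 u (t - T) 0 x₀) R,
        κ ‖ξ₁ - ξ₂‖ ≤ cumError2 ℓ u (t - T) t ξ₁ ξ₂

/-- Weakly regularly persistent input trajectory at `x₀` for the bearing-only
system. -/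
def WeaklyRegularlyPersistentAt2 (ℓ : Pt) (u : ℝ → Pt) (x₀ : Pt) : Prop :=
  ∃ T > (0 : ℝ), ∃ R > (0 : ℝ), ∃ κ : ℝ → ℝ, IsKFunction κ ∧
    ∀ t ≥ T, ∀ ξ₁ ∈ Metric.closedBall (flow2 u (t - T) 0 x₀) R,
      ∀ ξ₂ ∈ Metric.closedBall (flow2 u (t - T) 0 x₀) R,
        κ ‖ξ₁ - ξ₂‖ ≤ cumError2 ℓ u (t - T) t ξ₁ ξ₂

-- auxiliary lemmas

@[simp] lemma vec2_apply_zero (a b : ℝ) : vec2 a b 0 = a := rfl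
@[simp] lemma vec2_apply_one (a b : ℝ) : vec2 a b 1 = b := rfl

lemma norm_sq_pt (x : Pt) : ‖x‖^2 = x 0^2 + x 1^2 := by
  rw [← @real_inner_self_eq_norm_sq Pt _ _]
  rw [real_inner_self_eq_norm_sq, EuclideanSpace.norm_eq, Real.sq_sqrt (by positivity), Fin.sum_univ_two,
    Real.norm_eq_abs, Real.norm_eq_abs, sq_abs, sq_abs]

lemma vec2_smul (r a b : ℝ) : r • vec2 a b = vec2 (r*a) (r*b) := by
  ext i; fin_cases i <;> rfl

lemma vec2_decomp (a b : ℝ) : vec2 a b = a • vec2 1 0 + b • vec2 0 1 := by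
  ext i; fin_cases i
  · show a = a * 1 + b * 0; ring
  · show b = a * 0 + b * 1; ring

noncomputable def cross2 (x y : Pt) : ℝ := x 0 * y 1 - x 1 * y 0

lemma key_geom (q₁ q₂ : Pt) (h₁ : 0 < ‖q₁‖) (h₂ : 0 < ‖q₂‖) :
    (cross2 q₁ q₂)^2 / (‖q₁‖^2 * ‖q₂‖^2) ≤ ‖‖q₁‖⁻¹ • q₁ - ‖q₂‖⁻¹ • q₂‖^2 := by
  set n₁ := ‖q₁‖; set n₂ := ‖q₂‖
  have e1 : n₁^2 = q₁ 0^2 + q₁ 1^2 := norm_sq_pt q₁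
  have e2 : n₂^2 = q₂ 0^2 + q₂ 1^2 := norm_sq_pt q₂
  have e3 : ‖n₁⁻¹ • q₁ - n₂⁻¹ • q₂‖^2
      = (n₁⁻¹ * q₁ 0 - n₂⁻¹ * q₂ 0)^2 + (n₁⁻¹ * q₁ 1 - n₂⁻¹ * q₂ 1)^2 := by
    rw [norm_sq_pt]; rfl
  rw [e3, div_le_iff₀ (by positivity)]
  have hn₁ : n₁ ≠ 0 := ne_of_gt h₁
  have hn₂ : n₂ ≠ 0 := ne_of_gt h₂
  have expand : ((n₁⁻¹ * q₁ 0 - n₂⁻¹ * q₂ 0)^2 + (n₁⁻¹ * q₁ 1 - n₂⁻¹ * q₂ 1)^2)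
      * (n₁^2 * n₂^2) = n₂^2 * (q₁ 0^2 + q₁ 1^2) + n₁^2 * (q₂ 0^2 + q₂ 1^2)
        - 2 * n₁ * n₂ * (q₁ 0 * q₂ 0 + q₁ 1 * q₂ 1) := by
    field_simp; ring
  have key : (cross2 q₁ q₂)^2 ≤ n₂^2 * (q₁ 0^2 + q₁ 1^2) + n₁^2 * (q₂ 0^2 + q₂ 1^2)
        - 2 * n₁ * n₂ * (q₁ 0 * q₂ 0 + q₁ 1 * q₂ 1) := by
    unfold cross2
    nlinarith [sq_nonneg (n₁ * n₂ - (q₁ 0 * q₂ 0 + q₁ 1 * q₂ 1)),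
      sq_nonneg (q₁ 0 * q₂ 0 + q₁ 1 * q₂ 1), mul_pos h₁ h₂]
  linarith [expand, key]

open Real in
lemma integral_trig (ω ψ₀ A B b a : ℝ) (hω : 0 < ω) :
    ∫ s in a..(a + 2*π/ω), (A * cos (ω*s+ψ₀) + B * sin (ω*s+ψ₀) + b)^2
      = (2*π/ω) * ((A^2+B^2)/2 + b^2) := by
  have hω' : ω ≠ 0 := ne_of_gt hω
  set T : ℝ := 2*π/ω with hT
  set F : ℝ → ℝ := fun s => ((A^2+B^2)/2 + b^2) * s
      + (A^2-B^2)/(4*ω) * sin (2*(ω*s+ψ₀)) - (A*B/(2*ω)) * cos (2*(ω*s+ψ₀))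
      + (2*A*b/ω) * sin (ω*s+ψ₀) - (2*B*b/ω) * cos (ω*s+ψ₀) with hF
  have hderiv : ∀ s : ℝ, HasDerivAt F ((A * cos (ω*s+ψ₀) + B * sin (ω*s+ψ₀) + b)^2) s := by
    intro s
    have hlin : HasDerivAt (fun s : ℝ => ω*s+ψ₀) ω s := by
      simpa using ((hasDerivAt_id s).const_mul ω).add_const ψ₀
    have hlin2 : HasDerivAt (fun s : ℝ => 2*(ω*s+ψ₀)) (2*ω) s := by
      simpa [mul_comm] using hlin.const_mul 2
    have h1 : HasDerivAt (fun s : ℝ => ((A^2+B^2)/2 + b^2) * s) ((A^2+B^2)/2 + b^2) s := by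
      simpa using (hasDerivAt_id s).const_mul ((A^2+B^2)/2 + b^2)
    have h2 := (hlin2.sin).const_mul ((A^2-B^2)/(4*ω))
    have h3 := (hlin2.cos).const_mul (A*B/(2*ω))
    have h4 := (hlin.sin).const_mul (2*A*b/ω)
    have h5 := (hlin.cos).const_mul (2*B*b/ω)
    have := (((h1.add h2).sub h3).add h4).sub h5
    convert this using 1
    · rfl
    · rfl
    · rfl
    have hs := sin_sq_add_cos_sq (ω*s+ψ₀)
    rw [cos_two_mul, sin_two_mul]
    field_simp
    linear_combination (8 * B^2) * hs
  have hcont : Continuous fun s => (A * cos (ω*s+ψ₀) + B * sin (ω*s+ψ₀) + b)^2 := by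
    fun_prop
  rw [intervalIntegral.integral_eq_sub_of_hasDerivAt (fun s _ => hderiv s)
    (hcont.intervalIntegrable _ _)]
  have harg : ω*(a+T)+ψ₀ = (ω*a+ψ₀) + 2*π := by rw [hT]; field_simp; ring
  have harg2 : 2*(ω*a+ψ₀+2*π) = (2*(ω*a+ψ₀) + 2*π) + 2*π := by ring
  have e1 : F (a+T) - F a = T * ((A^2+B^2)/2 + b^2) := by
    simp only [hF]
    simp only [harg, harg2, sin_add_two_pi, cos_add_two_pi]
    ring
  rw [e1, hT]

lemma norm_vec2_cos (r θ : ℝ) (hr : 0 ≤ r) :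
    ‖vec2 (r * Real.cos θ) (r * Real.sin θ)‖ = r := by
  have h : ‖vec2 (r * Real.cos θ) (r * Real.sin θ)‖^2 = r^2 := by
    rw [norm_sq_pt]
    simp only [vec2_apply_zero, vec2_apply_one]
    nlinarith [Real.sin_sq_add_cos_sq θ]
  have h2 : (‖vec2 (r * Real.cos θ) (r * Real.sin θ)‖ - r)
      * (‖vec2 (r * Real.cos θ) (r * Real.sin θ)‖ + r) = 0 := by nlinarith
  rcases mul_eq_zero.1 h2 with h3 | h3
  · linarith
  · have := norm_nonneg (vec2 (r * Real.cos θ) (r * Real.sin θ)); linarith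

lemma bearing_add (ℓ q : Pt) (hq : q ≠ 0) : bearing ℓ (ℓ + q) = -(‖q‖⁻¹ • q) := by
  have h1 : ℓ + q ≠ ℓ := by simpa using hq
  rw [bearing, if_neg h1]
  have h2 : ℓ - (ℓ + q) = -q := by abel
  rw [h2, norm_neg, smul_neg]

lemma hasDerivAt_circ (ω r₀ ψ₀ s : ℝ) :
    HasDerivAt (fun τ => vec2 (r₀ * Real.cos (ω*τ+ψ₀)) (r₀ * Real.sin (ω*τ+ψ₀)))
      ((ω*r₀) • vec2 (-Real.sin (ω*s+ψ₀)) (Real.cos (ω*s+ψ₀))) s := by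
  have hθ : HasDerivAt (fun τ : ℝ => ω*τ+ψ₀) ω s := by
    simpa using ((hasDerivAt_id s).const_mul ω).add_const ψ₀
  have h0 := (hθ.cos.const_mul r₀).smul_const (vec2 1 0)
  have h1 := (hθ.sin.const_mul r₀).smul_const (vec2 0 1)
  have h := h0.add h1
  have hfun : (fun τ => (r₀ * Real.cos (ω*τ+ψ₀)) • vec2 1 0
      + (r₀ * Real.sin (ω*τ+ψ₀)) • vec2 0 1)
      = fun τ => vec2 (r₀ * Real.cos (ω*τ+ψ₀)) (r₀ * Real.sin (ω*τ+ψ₀)) := by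
    funext τ; rw [← vec2_decomp]
  have hd : (r₀ * (-Real.sin (ω*s+ψ₀) * ω)) • vec2 1 0 + (r₀ * (Real.cos (ω*s+ψ₀) * ω)) • vec2 0 1
      = (ω*r₀) • vec2 (-Real.sin (ω*s+ψ₀)) (Real.cos (ω*s+ψ₀)) := by
    rw [← vec2_decomp, vec2_smul]
    congr 1 <;> ring
  rw [hd] at h
  rw [← hfun]
  exact h

lemma cont_ucirc (ω r₀ ψ₀ : ℝ) :
    Continuous (fun s => (ω * r₀) • vec2 (-Real.sin (ω * s + ψ₀)) (Real.cos (ω * s + ψ₀))) := by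
  have : (fun s => (ω * r₀) • vec2 (-Real.sin (ω * s + ψ₀)) (Real.cos (ω * s + ψ₀)))
      = fun s => (ω * r₀) • ((-Real.sin (ω * s + ψ₀)) • vec2 1 0 + (Real.cos (ω * s + ψ₀)) • vec2 0 1) := by
    funext s; rw [← vec2_decomp]
  rw [this]; fun_prop

lemma cont_circ (ω r₀ ψ₀ : ℝ) :
    Continuous (fun s => vec2 (r₀ * Real.cos (ω*s+ψ₀)) (r₀ * Real.sin (ω*s+ψ₀))) := by
  have : (fun s => vec2 (r₀ * Real.cos (ω*s+ψ₀)) (r₀ * Real.sin (ω*s+ψ₀)))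
      = fun s => (r₀ * Real.cos (ω*s+ψ₀)) • vec2 1 0 + (r₀ * Real.sin (ω*s+ψ₀)) • vec2 0 1 := by
    funext s; rw [← vec2_decomp]
  rw [this]; fun_prop

lemma flow_circ (ω r₀ ψ₀ : ℝ) (s t₁ : ℝ) (ξ : Pt) :
    flow2 (fun s => (ω * r₀) • vec2 (-Real.sin (ω * s + ψ₀)) (Real.cos (ω * s + ψ₀))) s t₁ ξ
      = ξ + (vec2 (r₀ * Real.cos (ω*s+ψ₀)) (r₀ * Real.sin (ω*s+ψ₀))
           - vec2 (r₀ * Real.cos (ω*t₁+ψ₀)) (r₀ * Real.sin (ω*t₁+ψ₀))) := by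
  unfold flow2
  rw [intervalIntegral.integral_eq_sub_of_hasDerivAt (fun τ _ => hasDerivAt_circ ω r₀ ψ₀ τ)
    ((cont_ucirc ω r₀ ψ₀).intervalIntegrable _ _)]

set_option maxHeartbeats 1000000 in
theorem aux18 (ℓ x₀ : Pt) (hx₀ : x₀ ≠ ℓ) (ω r₀ ψ₀ : ℝ) (hω : 0 < ω)
    (hr₀ : r₀ = ‖ℓ - x₀‖) (hr₀pos : 0 < r₀)
    (hψ₀ : x₀ - ℓ = r₀ • vec2 (Real.cos ψ₀) (Real.sin ψ₀)) :
    ∃ T > (0 : ℝ), ∃ R > (0 : ℝ), ∃ κ : ℝ → ℝ, IsKFunction κ ∧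
    ∀ t ≥ T, ∀ ξ₁ ∈ Metric.closedBall (flow2 (fun s => (ω * r₀) • vec2 (-Real.sin (ω * s + ψ₀)) (Real.cos (ω * s + ψ₀))) (t - T) 0 x₀) R,
      ∀ ξ₂ ∈ Metric.closedBall (flow2 (fun s => (ω * r₀) • vec2 (-Real.sin (ω * s + ψ₀)) (Real.cos (ω * s + ψ₀))) (t - T) 0 x₀) R,
        κ ‖ξ₁ - ξ₂‖ ≤ cumError2 ℓ (fun s => (ω * r₀) • vec2 (-Real.sin (ω * s + ψ₀)) (Real.cos (ω * s + ψ₀))) (t - T) t ξ₁ ξ₂ := by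
  set u : ℝ → Pt := fun s => (ω * r₀) • vec2 (-Real.sin (ω * s + ψ₀)) (Real.cos (ω * s + ψ₀)) with hu
  set c : ℝ → Pt := fun s => vec2 (r₀ * Real.cos (ω*s+ψ₀)) (r₀ * Real.sin (ω*s+ψ₀)) with hcdef
  set T : ℝ := 2*Real.pi/ω with hTdef
  have hT : 0 < T := by rw [hTdef]; positivity
  set M : ℝ := (3*r₀/2)^2 * (3*r₀/2)^2 with hMdef
  have hM : 0 < M := by rw [hMdef]; positivity
  set C : ℝ := T * r₀^2 / (2*M) with hCdef
  have hC : 0 < C := by rw [hCdef]; positivity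
  refine ⟨T, hT, r₀/2, by positivity, fun r => C * r^2, ⟨?_, ?_, ?_⟩, ?_⟩
  · exact (by fun_prop : Continuous fun r : ℝ => C * r^2).continuousOn
  · intro x hx y hy hxy
    simp only [Set.mem_Ici] at hx hy
    exact mul_lt_mul_of_pos_left (by nlinarith) hC
  · simp
  intro t ht ξ₁ hξ₁ ξ₂ hξ₂
  set a : ℝ := t - T with ha
  have hat : a + T = t := by rw [ha]; ring
  have hnormc : ∀ s, ‖c s‖ = r₀ := fun s => norm_vec2_cos r₀ (ω*s+ψ₀) hr₀pos.le
  have hc0 : c 0 = x₀ - ℓ := by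
    rw [hcdef]
    simp only [mul_zero, zero_add]
    rw [hψ₀, vec2_smul]
  have hxc : flow2 u a 0 x₀ = ℓ + c a := by
    rw [hu, flow_circ,
      show vec2 (r₀ * Real.cos (ω*a+ψ₀)) (r₀ * Real.sin (ω*a+ψ₀)) = c a from rfl,
      show vec2 (r₀ * Real.cos (ω*0+ψ₀)) (r₀ * Real.sin (ω*0+ψ₀)) = c 0 from rfl, hc0]
    abel
  rw [hxc] at hξ₁ hξ₂
  set δ₁ : Pt := ξ₁ - (ℓ + c a) with hδ₁def
  set δ₂ : Pt := ξ₂ - (ℓ + c a) with hδ₂def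
  have hδ₁ : ‖δ₁‖ ≤ r₀/2 := by rw [hδ₁def]; exact mem_closedBall_iff_norm.1 hξ₁
  have hδ₂ : ‖δ₂‖ ≤ r₀/2 := by rw [hδ₂def]; exact mem_closedBall_iff_norm.1 hξ₂
  set q₁ : ℝ → Pt := fun s => c s + δ₁ with hq₁def
  set q₂ : ℝ → Pt := fun s => c s + δ₂ with hq₂def
  set d : Pt := δ₂ - δ₁ with hddef
  have hd : d = ξ₂ - ξ₁ := by rw [hddef, hδ₁def, hδ₂def]; abel
  -- norm bounds
  have hql : ∀ (δ : Pt), ‖δ‖ ≤ r₀/2 → ∀ s, r₀/2 ≤ ‖c s + δ‖ ∧ ‖c s + δ‖ ≤ 3*r₀/2 := by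
    intro δ hδ s
    constructor
    · have h := norm_add_le (c s + δ) (-δ)
      simp only [add_neg_cancel_right, norm_neg] at h
      have := hnormc s; linarith
    · have h := norm_add_le (c s) δ
      have := hnormc s; linarith
  have hq₁l := fun s => (hql δ₁ hδ₁ s).1
  have hq₁u := fun s => (hql δ₁ hδ₁ s).2
  have hq₂l := fun s => (hql δ₂ hδ₂ s).1
  have hq₂u := fun s => (hql δ₂ hδ₂ s).2
  have hq₁pos : ∀ s, 0 < ‖q₁ s‖ := fun s => lt_of_lt_of_le (by positivity) (hq₁l s)
  have hq₂pos : ∀ s, 0 < ‖q₂ s‖ := fun s => lt_of_lt_of_le (by positivity) (hq₂l s)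
  -- flow values
  have hflow : ∀ (ξ δ : Pt), ξ - (ℓ + c a) = δ → ∀ s, flow2 u s a ξ = ℓ + (c s + δ) := by
    intro ξ δ hδeq s
    rw [hu, flow_circ,
      show vec2 (r₀ * Real.cos (ω*s+ψ₀)) (r₀ * Real.sin (ω*s+ψ₀)) = c s from rfl,
      show vec2 (r₀ * Real.cos (ω*a+ψ₀)) (r₀ * Real.sin (ω*a+ψ₀)) = c a from rfl, ← hδeq]
    abel
  have hflow₁ := hflow ξ₁ δ₁ rfl
  have hflow₂ := hflow ξ₂ δ₂ rfl
  -- rewrite cumError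
  have hcum : cumError2 ℓ u a t ξ₁ ξ₂
      = ∫ s in a..t, ‖(‖q₁ s‖⁻¹ • q₁ s) - (‖q₂ s‖⁻¹ • q₂ s)‖^2 := by
    unfold cumError2
    congr 1
    funext s
    rw [hflow₁ s, hflow₂ s,
      bearing_add ℓ (c s + δ₁) (norm_pos_iff.1 (hq₁pos s)),
      bearing_add ℓ (c s + δ₂) (norm_pos_iff.1 (hq₂pos s))]
    rw [show -(‖c s + δ₁‖⁻¹ • (c s + δ₁)) - -(‖c s + δ₂‖⁻¹ • (c s + δ₂))
        = -((‖c s + δ₁‖⁻¹ • (c s + δ₁)) - (‖c s + δ₂‖⁻¹ • (c s + δ₂))) from by abel,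
      norm_neg]
  -- cross decomposition
  set A : ℝ := r₀ * d 1 with hA
  set B : ℝ := -(r₀ * d 0) with hB
  set b : ℝ := cross2 δ₁ d with hb
  have hcross : ∀ s, cross2 (q₁ s) (q₂ s)
      = A * Real.cos (ω*s+ψ₀) + B * Real.sin (ω*s+ψ₀) + b := by
    intro s
    have e10 : q₁ s 0 = r₀ * Real.cos (ω*s+ψ₀) + δ₁ 0 := rfl
    have e11 : q₁ s 1 = r₀ * Real.sin (ω*s+ψ₀) + δ₁ 1 := rfl
    have e20 : q₂ s 0 = r₀ * Real.cos (ω*s+ψ₀) + δ₂ 0 := rfl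
    have e21 : q₂ s 1 = r₀ * Real.sin (ω*s+ψ₀) + δ₂ 1 := rfl
    have ed0 : d 0 = δ₂ 0 - δ₁ 0 := rfl
    have ed1 : d 1 = δ₂ 1 - δ₁ 1 := rfl
    unfold cross2
    rw [e10, e11, e20, e21, hA, hB, hb]
    unfold cross2
    rw [ed0, ed1]
    ring
  -- pointwise bound
  have hpoint : ∀ s, (cross2 (q₁ s) (q₂ s))^2 / M
      ≤ ‖(‖q₁ s‖⁻¹ • q₁ s) - (‖q₂ s‖⁻¹ • q₂ s)‖^2 := by
    intro s
    have hprod : ‖q₁ s‖^2 * ‖q₂ s‖^2 ≤ M := by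
      rw [hMdef]
      have h1 := hq₁u s; have h2 := hq₂u s
      have h1' := (hq₁pos s).le; have h2' := (hq₂pos s).le
      gcongr
    have hprodpos : 0 < ‖q₁ s‖^2 * ‖q₂ s‖^2 :=
      mul_pos (pow_pos (hq₁pos s) 2) (pow_pos (hq₂pos s) 2)
    calc (cross2 (q₁ s) (q₂ s))^2 / M
        ≤ (cross2 (q₁ s) (q₂ s))^2 / (‖q₁ s‖^2 * ‖q₂ s‖^2) := by
          rw [div_le_div_iff₀ hM hprodpos]
          nlinarith [sq_nonneg (cross2 (q₁ s) (q₂ s))]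
      _ ≤ _ := key_geom (q₁ s) (q₂ s) (hq₁pos s) (hq₂pos s)
  -- integrability
  have hccont : Continuous c := by rw [hcdef]; exact cont_circ ω r₀ ψ₀
  have hq₁cont : Continuous q₁ := by rw [hq₁def]; exact hccont.add continuous_const
  have hq₂cont : Continuous q₂ := by rw [hq₂def]; exact hccont.add continuous_const
  have hNcont : Continuous fun s => ‖(‖q₁ s‖⁻¹ • q₁ s) - (‖q₂ s‖⁻¹ • q₂ s)‖^2 := by
    have h1 : Continuous fun s => ‖q₁ s‖⁻¹ • q₁ s :=
      ((hq₁cont.norm).inv₀ fun s => (hq₁pos s).ne').smul hq₁cont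
    have h2 : Continuous fun s => ‖q₂ s‖⁻¹ • q₂ s :=
      ((hq₂cont.norm).inv₀ fun s => (hq₂pos s).ne').smul hq₂cont
    exact ((h1.sub h2).norm).pow 2
  have hgM : (fun s => (cross2 (q₁ s) (q₂ s))^2 / M)
      = fun s => (A * Real.cos (ω*s+ψ₀) + B * Real.sin (ω*s+ψ₀) + b)^2 / M :=
    funext fun s => by rw [hcross s]
  have hgcont : Continuous fun s => (cross2 (q₁ s) (q₂ s))^2 / M := by
    rw [hgM]; fun_prop
  -- integral comparison
  have hmono : (∫ s in a..t, (cross2 (q₁ s) (q₂ s))^2 / M)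
      ≤ ∫ s in a..t, ‖(‖q₁ s‖⁻¹ • q₁ s) - (‖q₂ s‖⁻¹ • q₂ s)‖^2 := by
    apply intervalIntegral.integral_mono_on (by linarith : a ≤ t)
      (hgcont.intervalIntegrable _ _) (hNcont.intervalIntegrable _ _)
    exact fun s _ => hpoint s
  -- compute lower integral
  have hval : (∫ s in a..t, (cross2 (q₁ s) (q₂ s))^2 / M)
      = T * ((A^2+B^2)/2 + b^2) / M := by
    rw [hgM, intervalIntegral.integral_div, ← hat, integral_trig ω ψ₀ A B b a hω, ← hTdef]
  -- final bound
  have hAB : A^2 + B^2 = r₀^2 * ‖d‖^2 := by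
    rw [hA, hB, norm_sq_pt]; ring
  have hnd : ‖ξ₁ - ξ₂‖ = ‖d‖ := by rw [hd, norm_sub_rev]
  have hfinal : C * ‖ξ₁ - ξ₂‖^2 ≤ T * ((A^2+B^2)/2 + b^2) / M := by
    rw [hnd, hAB, hCdef, div_mul_eq_mul_div, div_le_div_iff₀ (by positivity) hM]
    nlinarith [sq_nonneg b, sq_nonneg ‖d‖, mul_pos hT hM]
  calc C * ‖ξ₁ - ξ₂‖^2 ≤ T * ((A^2+B^2)/2 + b^2) / M := hfinal
    _ = ∫ s in a..t, (cross2 (q₁ s) (q₂ s))^2 / M := hval.symm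
    _ ≤ ∫ s in a..t, ‖(‖q₁ s‖⁻¹ • q₁ s) - (‖q₂ s‖⁻¹ • q₂ s)‖^2 := hmono
    _ = cumError2 ℓ u a t ξ₁ ξ₂ := hcum.symm

/-- the circular input
`u_circ(s) = ω r₀ (−sin(ωs + ψ₀), cos(ωs + ψ₀))` is a weakly regularly persistent
input trajectory of the bearing-only system at `x₀`. -/
theorem stmt18 (ℓ x₀ : Pt) (hx₀ : x₀ ≠ ℓ) (ω r₀ ψ₀ : ℝ) (hω : 0 < ω)
    (hr₀ : r₀ = ‖ℓ - x₀‖) (hr₀pos : 0 < r₀)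
    (hψ₀ : x₀ - ℓ = r₀ • vec2 (Real.cos ψ₀) (Real.sin ψ₀)) :
    WeaklyRegularlyPersistentAt2 ℓ
      (fun s => (ω * r₀) • vec2 (-Real.sin (ω * s + ψ₀)) (Real.cos (ω * s + ψ₀)))
      x₀ := by
  unfold WeaklyRegularlyPersistentAt2
  exact aux18 ℓ x₀ hx₀ ω r₀ ψ₀ hω hr₀ hr₀pos hψ₀
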